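/- Let σ and τ be completely different permutations of Fin n and let A, B ∈ Matrix (Fin n) (Fin n) ℂ be arbitrary. Then the matrix product ρ[A,σ] * ρ[B,τ] is the zero matrix. -/
import Mathlib

/-- The CDP matrix of `A` and a permutation `σ`:
`ρ[A,σ]_{(i,p),(j,q)} = A_{ij}` if `p = σ i` and `q = σ j`, and `0` otherwise. -/
def cdpMatrix {n : ℕ} (A : Matrix (Fin n) (Fin n) ℂ) (σ : Equiv.Perm (Fin n)) :
    Matrix (Fin n × Fin n) (Fin n × Fin n) ℂ :=
  Matrix.of fun x y => if x.2 = σ x.1 ∧ y.2 = σ y.1 then A x.1 y.1 else 0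

/-- If `σ` and `τ` are completely different permutations then `ρ[A,σ] * ρ[B,τ] = 0`. -/
theorem cdpMatrix_mul_eq_zero {n : ℕ} (σ τ : Equiv.Perm (Fin n))
    (h : ∀ i, σ i ≠ τ i) (A B : Matrix (Fin n) (Fin n) ℂ) :
    cdpMatrix A σ * cdpMatrix B τ = 0 := by
  ext x y
  simp only [Matrix.mul_apply, cdpMatrix, Matrix.of_apply, Matrix.zero_apply]
  apply Finset.sum_eq_zero
  rintro ⟨j, q⟩ -
  by_cases h1 : x.2 = σ x.1 ∧ q = σ j
  · by_cases h2 : q = τ j ∧ y.2 = τ y.1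
    · exact absurd (h1.2 ▸ h2.1) (h j)
    · simp [h2]
  · simp [h1]
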